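/- Let Φ ∈ C¹(ℝⁿ, ℝ) and suppose there exist ω > 0 and C > 0 such that x·∇Φ(x) ≥ |x|^{1+ω}/C whenever |x| ≥ C. Let v : ℝⁿ → ℂⁿ be a Schwartz function and define f(x) = ∫₀¹ e^{−(Φ(x) − Φ(tx))/2} (x · v(tx)) dt. Then for every k ∈ ℕ one has sup_{x ∈ ℝⁿ} |x|^k |f(x)| < ∞; in particular f ∈ L²(ℝⁿ). -/

import Mathlib

open MeasureTheory

/-- `f(x) = ∫₀¹ e^{−(Φ(x) − Φ(tx))/2} (x · v(tx)) dt`. -/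
noncomputable def radialSolution {n : ℕ} (Φ : EuclideanSpace ℝ (Fin n) → ℝ)
    (v : EuclideanSpace ℝ (Fin n) → EuclideanSpace ℂ (Fin n))
    (x : EuclideanSpace ℝ (Fin n)) : ℂ :=
  ∫ t in (0 : ℝ)..1,
    (Real.exp (-(Φ x - Φ (t • x)) / 2) : ℂ) * ∑ j, (x j : ℂ) * v (t • x) j

lemma stmt17_coord_le {𝕜 : Type*} [RCLike 𝕜] {n : ℕ} (x : EuclideanSpace 𝕜 (Fin n)) (j : Fin n) :
    ‖x j‖ ≤ ‖x‖ := by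
  rw [EuclideanSpace.norm_eq]
  rw [show ‖x j‖ = Real.sqrt (‖x j‖^2) by rw [Real.sqrt_sq (norm_nonneg _)]]
  apply Real.sqrt_le_sqrt
  exact Finset.single_le_sum (f := fun i => ‖x i‖^2) (fun i _ => by positivity) (Finset.mem_univ j)

lemma stmt17_sum_le {n : ℕ} (x : EuclideanSpace ℝ (Fin n)) (w : EuclideanSpace ℂ (Fin n)) :
    ‖∑ j, (x j : ℂ) * w j‖ ≤ n * ‖x‖ * ‖w‖ := by
  calc ‖∑ j, (x j : ℂ) * w j‖ ≤ ∑ j, ‖(x j : ℂ) * w j‖ := norm_sum_le _ _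
    _ ≤ ∑ _j : Fin n, ‖x‖ * ‖w‖ := by
        refine Finset.sum_le_sum fun j _ => ?_
        rw [norm_mul, Complex.norm_real]
        exact mul_le_mul (stmt17_coord_le x j) (stmt17_coord_le w j) (norm_nonneg _) (norm_nonneg _)
    _ = n * ‖x‖ * ‖w‖ := by simp [Finset.sum_const, mul_assoc]

section main

variable {n : ℕ} (Φ : EuclideanSpace ℝ (Fin n) → ℝ)
variable (v : SchwartzMap (EuclideanSpace ℝ (Fin n)) (EuclideanSpace ℂ (Fin n)))

/-- Continuity of the solution. -/
lemma stmt17_cont (hΦ : ContDiff ℝ 1 Φ) : Continuous (radialSolution Φ (⇑v)) := by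
  have hF : Continuous (Function.uncurry fun (x : EuclideanSpace ℝ (Fin n)) (t : ℝ) =>
      (Real.exp (-(Φ x - Φ (t • x)) / 2) : ℂ) * ∑ j, (x j : ℂ) * v (t • x) j) := by
    have hΦc : Continuous Φ := hΦ.continuous
    have hsm : Continuous fun p : EuclideanSpace ℝ (Fin n) × ℝ => p.2 • p.1 :=
      continuous_snd.smul continuous_fst
    apply Continuous.mul
    · exact Complex.continuous_ofReal.comp <| Real.continuous_exp.comp <| by fun_prop
    · apply continuous_finset_sum
      intro j _
      apply Continuous.mul
      · exact Complex.continuous_ofReal.comp <|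
          ((EuclideanSpace.proj j : EuclideanSpace ℝ (Fin n) →L[ℝ] ℝ).continuous).comp continuous_fst
      · exact ((EuclideanSpace.proj j : EuclideanSpace ℂ (Fin n) →L[ℂ] ℂ).continuous).comp
          (v.continuous.comp hsm)
  exact intervalIntegral.continuous_parametric_intervalIntegral_of_continuous' hF 0 1

set_option maxHeartbeats 2000000 in
/-- The key polynomial-decay bound. -/
lemma stmt17_key (hΦ : ContDiff ℝ 1 Φ) (ω C : ℝ) (hω : 0 < ω) (hC : 0 < C)
    (hIV : ∀ x : EuclideanSpace ℝ (Fin n), C ≤ ‖x‖ → ‖x‖ ^ (1 + ω) / C ≤ fderiv ℝ Φ x x)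
    (k : ℕ) :
    ∃ M : ℝ, 0 ≤ M ∧ ∀ x : EuclideanSpace ℝ (Fin n),
      ‖x‖ ^ k * ‖radialSolution Φ (⇑v) x‖ ≤ M := by
  have hΦd : Differentiable ℝ Φ := hΦ.differentiable one_ne_zero
  set F : EuclideanSpace ℝ (Fin n) → ℝ → ℂ := fun x t =>
    (Real.exp (-(Φ x - Φ (t • x)) / 2) : ℂ) * ∑ j, (x j : ℂ) * v (t • x) j with hFdef
  have hfeq : ∀ x, radialSolution Φ (⇑v) x = ∫ t in (0:ℝ)..1, F x t := fun x => rfl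
  have hFcont : ∀ x, Continuous (F x) := by
    intro x
    have hΦc : Continuous Φ := hΦ.continuous
    apply Continuous.mul
    · exact Complex.continuous_ofReal.comp <| Real.continuous_exp.comp <| by fun_prop
    · apply continuous_finset_sum
      intro j _
      exact continuous_const.mul <|
        ((EuclideanSpace.proj j : EuclideanSpace ℂ (Fin n) →L[ℂ] ℂ).continuous).comp
          (v.continuous.comp (continuous_id.smul continuous_const))
  have hgderiv : ∀ (x : EuclideanSpace ℝ (Fin n)) (s : ℝ),
      HasDerivAt (fun s : ℝ => Φ (s • x)) (fderiv ℝ Φ (s • x) x) s := by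
    intro x s
    have h1 : HasDerivAt (fun s : ℝ => s • x) x s := by
      simpa using (hasDerivAt_id s).smul_const x
    exact (hΦd (s • x)).hasFDerivAt.comp_hasDerivAt s h1
  have hg'cont : ∀ x : EuclideanSpace ℝ (Fin n),
      Continuous fun s : ℝ => fderiv ℝ Φ (s • x) x := by
    intro x
    have h1 : Continuous fun s : ℝ => fderiv ℝ Φ (s • x) :=
      (hΦ.continuous_fderiv one_ne_zero).comp (continuous_id.smul continuous_const)
    exact h1.clm_apply continuous_const
  have hFTC : ∀ (x : EuclideanSpace ℝ (Fin n)) (t u : ℝ),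
      ∫ s in t..u, fderiv ℝ Φ (s • x) x = Φ (u • x) - Φ (t • x) :=
    fun x t u => intervalIntegral.integral_eq_sub_of_hasDerivAt
      (fun s _ => hgderiv x s) ((hg'cont x).intervalIntegrable t u)
  have key_pos : ∀ (x : EuclideanSpace ℝ (Fin n)) (s : ℝ), 0 < s → C ≤ s * ‖x‖ →
      s ^ ω * ‖x‖ ^ (1 + ω) / C ≤ fderiv ℝ Φ (s • x) x := by
    intro x s hs hsx
    have hn : ‖s • x‖ = s * ‖x‖ := by rw [norm_smul, Real.norm_eq_abs, abs_of_pos hs]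
    have h := hIV (s • x) (by rw [hn]; exact hsx)
    rw [hn] at h
    have hmap : (fderiv ℝ Φ (s • x)) (s • x) = s * (fderiv ℝ Φ (s • x)) x := by
      rw [(fderiv ℝ Φ (s • x)).map_smul]; simp
    rw [hmap] at h
    have hrw : (s * ‖x‖) ^ (1 + ω) = s * (s ^ ω * ‖x‖ ^ (1 + ω)) := by
      rw [Real.mul_rpow hs.le (norm_nonneg x), Real.rpow_add hs, Real.rpow_one]; ring
    rw [hrw, mul_div_assoc] at h
    exact (mul_le_mul_iff_of_pos_left hs).mp h
  have key_nonneg : ∀ (x : EuclideanSpace ℝ (Fin n)) (s : ℝ), 0 < s → C ≤ s * ‖x‖ →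
      0 ≤ fderiv ℝ Φ (s • x) x := by
    intro x s hs hsx
    refine le_trans ?_ (key_pos x s hs hsx)
    have h1 : (0:ℝ) ≤ s ^ ω := Real.rpow_nonneg hs.le ω
    have h2 : (0:ℝ) ≤ ‖x‖ ^ (1+ω) := Real.rpow_nonneg (norm_nonneg x) _
    positivity
  obtain ⟨M₁, hM₁⟩ := (isCompact_closedBall (0 : EuclideanSpace ℝ (Fin n)) C).exists_bound_of_continuousOn
    (hΦ.continuous_fderiv one_ne_zero).continuousOn
  set M : ℝ := max M₁ 0 with hMdef
  have hM0 : (0:ℝ) ≤ M := le_max_right _ _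
  have hM : ∀ y : EuclideanSpace ℝ (Fin n), ‖y‖ ≤ C → ‖fderiv ℝ Φ y‖ ≤ M :=
    fun y hy => le_trans (hM₁ y (mem_closedBall_zero_iff.mpr hy)) (le_max_left _ _)
  set R : ℝ := max (2 * C) 1 with hRdef
  have hR1 : (1:ℝ) ≤ R := le_max_right _ _
  have hR2C : 2 * C ≤ R := le_max_left _ _
  have hR0 : (0:ℝ) < R := lt_of_lt_of_le one_pos hR1
  -- Lemma A
  have lemA : ∀ (x : EuclideanSpace ℝ (Fin n)) (t : ℝ), 0 < t → t ≤ 1 → C ≤ t * ‖x‖ →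
      (1 - t) * (t ^ ω * ‖x‖ ^ (1 + ω) / C) ≤ Φ x - Φ (t • x) := by
    intro x t ht ht1 hc
    have heq : Φ x - Φ (t • x) = ∫ s in t..1, fderiv ℝ Φ (s • x) x := by
      rw [hFTC x t 1, one_smul]
    rw [heq]
    have hconst : ∫ _s in t..(1:ℝ), t ^ ω * ‖x‖ ^ (1 + ω) / C
        = (1 - t) * (t ^ ω * ‖x‖ ^ (1 + ω) / C) := by
      rw [intervalIntegral.integral_const, smul_eq_mul]
    rw [← hconst]
    refine intervalIntegral.integral_mono_on ht1 intervalIntegrable_const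
      ((hg'cont x).intervalIntegrable t 1) fun s hs => ?_
    have hs0 : 0 < s := lt_of_lt_of_le ht hs.1
    have hx0 : (0:ℝ) ≤ ‖x‖ := norm_nonneg x
    refine le_trans ?_ (key_pos x s hs0 (le_trans hc (by nlinarith [hs.1])))
    have h2 : (0:ℝ) ≤ ‖x‖ ^ (1+ω) := Real.rpow_nonneg hx0 _
    gcongr
    exact hs.1
  have hxRC : ∀ x : EuclideanSpace ℝ (Fin n), R ≤ ‖x‖ → ∀ t : ℝ, 1/2 ≤ t → C ≤ t * ‖x‖ := by
    intro x hx t ht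
    have h1 : 2 * C ≤ ‖x‖ := le_trans hR2C hx
    nlinarith [norm_nonneg x]
  have lemA0 : ∀ x : EuclideanSpace ℝ (Fin n), R ≤ ‖x‖ → ∀ t : ℝ, 1/2 ≤ t → t ≤ 1 →
      0 ≤ Φ x - Φ (t • x) := by
    intro x hx t ht ht1
    refine le_trans ?_ (lemA x t (by linarith) ht1 (hxRC x hx t ht))
    exact mul_nonneg (by linarith)
      (div_nonneg (mul_nonneg (Real.rpow_nonneg (by linarith) _)
        (Real.rpow_nonneg (norm_nonneg x) _)) hC.le)
  have lemAhalf : ∀ x : EuclideanSpace ℝ (Fin n), R ≤ ‖x‖ →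
      (1/2) * ((1/2 : ℝ) ^ ω * ‖x‖ ^ (1 + ω) / C) ≤ Φ x - Φ ((1/2 : ℝ) • x) := by
    intro x hx
    have h := lemA x (1/2) (by norm_num) (by norm_num) (hxRC x hx (1/2) le_rfl)
    linarith
  -- Lemma B
  have lemB : ∀ x : EuclideanSpace ℝ (Fin n), R ≤ ‖x‖ → ∀ t : ℝ, 0 ≤ t → t ≤ 1/2 →
      (1/2) * ((1/2 : ℝ) ^ ω * ‖x‖ ^ (1 + ω) / C) - M * C ≤ Φ x - Φ (t • x) := by
    intro x hx t ht ht2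
    have hx0 : (0:ℝ) < ‖x‖ := lt_of_lt_of_le hR0 hx
    have hCx : C / ‖x‖ ≤ 1/2 := by
      rw [div_le_iff₀ hx0]
      nlinarith [le_trans hR2C hx]
    set u : ℝ := max t (C / ‖x‖) with hu
    have hu0 : 0 < u := lt_max_of_lt_right (by positivity)
    have htu : t ≤ u := le_max_left _ _
    have hu2 : u ≤ 1/2 := max_le ht2 hCx
    have hut : u - t ≤ C / ‖x‖ := by
      rcases le_total t (C / ‖x‖) with h | h
      · rw [hu, max_eq_right h]; linarith
      · rw [hu, max_eq_left h]; simp only [sub_self]; positivity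
    have h2 : 0 ≤ ∫ s in u..(1/2 : ℝ), fderiv ℝ Φ (s • x) x := by
      refine intervalIntegral.integral_nonneg hu2 fun s hs => ?_
      have hsu : u ≤ s := hs.1
      have hs0 : 0 < s := lt_of_lt_of_le hu0 hsu
      refine key_nonneg x s hs0 ?_
      have hd : C / ‖x‖ ≤ s := le_trans (le_max_right _ _) hsu
      rw [div_le_iff₀ hx0] at hd
      linarith
    have h1 : -(M * C) ≤ ∫ s in t..u, fderiv ℝ Φ (s • x) x := by
      have hmono : ∫ _s in t..u, (-(M * ‖x‖)) ≤ ∫ s in t..u, fderiv ℝ Φ (s • x) x := by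
        refine intervalIntegral.integral_mono_on htu intervalIntegrable_const
          ((hg'cont x).intervalIntegrable t u) fun s hs => ?_
        rcases le_total (s * ‖x‖) C with h | h
        · have hsx : ‖s • x‖ ≤ C := by
            rw [norm_smul, Real.norm_eq_abs, abs_of_nonneg (le_trans ht hs.1)]
            exact h
          have hb := hM (s • x) hsx
          have habs : |fderiv ℝ Φ (s • x) x| ≤ M * ‖x‖ :=
            calc |fderiv ℝ Φ (s • x) x| = ‖fderiv ℝ Φ (s • x) x‖ := rfl
              _ ≤ ‖fderiv ℝ Φ (s • x)‖ * ‖x‖ := (fderiv ℝ Φ (s • x)).le_opNorm x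
              _ ≤ M * ‖x‖ := by gcongr
          linarith [neg_abs_le (fderiv ℝ Φ (s • x) x)]
        · have hs00 : 0 ≤ s := le_trans ht hs.1
          have hs0 : 0 < s := by
            rcases hs00.lt_or_eq with h' | h'
            · exact h'
            · exfalso; rw [← h'] at h; simp at h; nlinarith
          have := key_nonneg x s hs0 h
          nlinarith [norm_nonneg x]
      rw [intervalIntegral.integral_const, smul_eq_mul] at hmono
      refine le_trans ?_ hmono
      have hstep : (u - t) * (M * ‖x‖) ≤ (C / ‖x‖) * (M * ‖x‖) :=
        mul_le_mul_of_nonneg_right hut (by positivity)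
      have hCxeq : (C / ‖x‖) * (M * ‖x‖) = M * C := by field_simp
      calc -(M * C) = -((C / ‖x‖) * (M * ‖x‖)) := by rw [hCxeq]
        _ ≤ -((u - t) * (M * ‖x‖)) := by linarith
        _ = (u - t) * (-(M * ‖x‖)) := by ring
    have hsplit : Φ ((1/2 : ℝ) • x) - Φ (t • x)
        = (∫ s in t..u, fderiv ℝ Φ (s • x) x) + ∫ s in u..(1/2 : ℝ), fderiv ℝ Φ (s • x) x := by
      rw [intervalIntegral.integral_add_adjacent_intervals
        ((hg'cont x).intervalIntegrable t u) ((hg'cont x).intervalIntegrable u _), hFTC]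
    have hhalf := lemAhalf x hx
    have hsum : Φ x - Φ (t • x)
        = (Φ x - Φ ((1/2 : ℝ) • x)) + (Φ ((1/2 : ℝ) • x) - Φ (t • x)) := by ring
    rw [hsum, hsplit]
    linarith
  -- Schwartz bounds
  obtain ⟨S₀, hS₀pos, hS₀'⟩ := v.decay 0 0
  have hS₀ : ∀ y, ‖v y‖ ≤ S₀ := by
    intro y; have := hS₀' y; simpa [norm_iteratedFDeriv_zero] using this
  obtain ⟨Sk, hSkpos, hSk'⟩ := v.decay (k + 1) 0
  have hSk : ∀ y : EuclideanSpace ℝ (Fin n), ‖y‖ ^ (k + 1) * ‖v y‖ ≤ Sk := by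
    intro y; have := hSk' y; simpa [norm_iteratedFDeriv_zero] using this
  set b : ℝ := (1/2 : ℝ) ^ ω / (4 * C) with hbdef
  have hb0 : 0 < b := div_pos (Real.rpow_pos_of_pos (by norm_num) ω) (by linarith)
  have hnorm : ∀ (x : EuclideanSpace ℝ (Fin n)) (t : ℝ),
      ‖F x t‖ = Real.exp (-(Φ x - Φ (t • x)) / 2) * ‖∑ j, (x j : ℂ) * v (t • x) j‖ := by
    intro x t
    rw [hFdef]
    rw [norm_mul, Complex.norm_real, Real.norm_eq_abs, Real.abs_exp]
  -- factorial bound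
  have hfac : ∀ r : ℝ, 0 ≤ r →
      r ^ (k + 1) * Real.exp (-(b * r)) ≤ (Nat.factorial (k + 1) : ℝ) / b ^ (k + 1) := by
    intro r hr
    have hfp : (0:ℝ) < (Nat.factorial (k + 1) : ℝ) := by exact_mod_cast Nat.factorial_pos _
    have h := Real.pow_div_factorial_le_exp (x := b * r) (by positivity) (k + 1)
    have h2 : (b * r) ^ (k + 1) ≤ (Nat.factorial (k + 1) : ℝ) * Real.exp (b * r) := by
      rw [div_le_iff₀ hfp] at h
      linarith [h]
    have hever : Real.exp (b * r) * Real.exp (-(b * r)) = 1 := by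
      rw [← Real.exp_add]; simp
    have h3 : (b * r) ^ (k + 1) * Real.exp (-(b * r)) ≤ (Nat.factorial (k + 1) : ℝ) :=
      calc (b * r) ^ (k + 1) * Real.exp (-(b * r))
          ≤ ((Nat.factorial (k + 1) : ℝ) * Real.exp (b * r)) * Real.exp (-(b * r)) :=
            mul_le_mul_of_nonneg_right h2 (Real.exp_nonneg _)
        _ = (Nat.factorial (k + 1) : ℝ) := by rw [mul_assoc, hever, mul_one]
    have hrw : r ^ (k + 1) * Real.exp (-(b * r))
        = ((b * r) ^ (k + 1) * Real.exp (-(b * r))) / b ^ (k + 1) := by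
      rw [mul_pow]; field_simp
    rw [hrw]
    exact div_le_div_of_nonneg_right h3 (by positivity) |>.trans_eq rfl
  -- small-x constant
  obtain ⟨K₁, hK₁⟩ := (isCompact_closedBall (0 : EuclideanSpace ℝ (Fin n)) R).exists_bound_of_continuousOn
    hΦ.continuous.continuousOn
  set K : ℝ := max K₁ 0 with hKdef
  have hK : ∀ y : EuclideanSpace ℝ (Fin n), ‖y‖ ≤ R → |Φ y| ≤ K :=
    fun y hy => le_trans (hK₁ y (mem_closedBall_zero_iff.mpr hy)) (le_max_left _ _)
  set A₁ : ℝ := (n * S₀ / 2) * Real.exp (M * C / 2) * ((Nat.factorial (k + 1) : ℝ) / b ^ (k + 1))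
    with hA₁def
  set A₂ : ℝ := n * Sk * 2 ^ (k + 1) with hA₂def
  set A₃ : ℝ := R ^ k * (Real.exp K * (n * R * S₀)) with hA₃def
  have hA₃0 : 0 ≤ A₃ := by
    refine mul_nonneg (pow_nonneg hR0.le k) (mul_nonneg (Real.exp_nonneg _) ?_)
    exact mul_nonneg (mul_nonneg (Nat.cast_nonneg n) hR0.le) hS₀pos.le
  refine ⟨max (A₁ + A₂) A₃, le_max_of_le_right hA₃0, fun x => ?_⟩
  rcases le_total ‖x‖ R with hxR | hxR
  · -- small x
    refine le_trans ?_ (le_max_right _ _)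
    have hfb : ‖radialSolution Φ (⇑v) x‖ ≤ Real.exp K * (n * R * S₀) := by
      rw [hfeq]
      have hb1 : ∀ t ∈ Set.uIoc (0:ℝ) 1, ‖F x t‖ ≤ Real.exp K * (n * R * S₀) := by
        intro t ht
        rw [Set.uIoc_of_le (by norm_num : (0:ℝ) ≤ 1)] at ht
        have ht0 : 0 < t := ht.1
        have ht1 : t ≤ 1 := ht.2
        have htx : ‖t • x‖ ≤ R := by
          rw [norm_smul, Real.norm_eq_abs, abs_of_pos ht0]
          nlinarith [norm_nonneg x]
        rw [hnorm]
        have hexp : Real.exp (-(Φ x - Φ (t • x)) / 2) ≤ Real.exp K := by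
          apply Real.exp_le_exp.mpr
          have h1 := abs_le.mp (hK x hxR)
          have h2 := abs_le.mp (hK (t • x) htx)
          linarith [h1.1, h1.2, h2.1, h2.2]
        calc Real.exp (-(Φ x - Φ (t • x)) / 2) * ‖∑ j, (x j : ℂ) * v (t • x) j‖
            ≤ Real.exp K * (n * ‖x‖ * ‖v (t • x)‖) :=
              mul_le_mul hexp (stmt17_sum_le x _) (norm_nonneg _) (Real.exp_nonneg _)
          _ ≤ Real.exp K * (n * R * S₀) := by
              refine mul_le_mul_of_nonneg_left ?_ (Real.exp_nonneg _)
              refine mul_le_mul (mul_le_mul_of_nonneg_left hxR (Nat.cast_nonneg n))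
                (hS₀ _) (norm_nonneg _) ?_
              exact mul_nonneg (Nat.cast_nonneg n) hR0.le
      have := intervalIntegral.norm_integral_le_of_norm_le_const hb1
      simpa using this
    calc ‖x‖ ^ k * ‖radialSolution Φ (⇑v) x‖
        ≤ R ^ k * (Real.exp K * (n * R * S₀)) := by
          refine mul_le_mul (pow_le_pow_left₀ (norm_nonneg x) hxR k) hfb (norm_nonneg _)
            (pow_nonneg hR0.le k)
      _ = A₃ := rfl
  · -- large x
    refine le_trans ?_ (le_max_left _ _)
    have hx0 : (0:ℝ) < ‖x‖ := lt_of_lt_of_le hR0 hxR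
    have hx1 : (1:ℝ) ≤ ‖x‖ := le_trans hR1 hxR
    have hint1 : IntervalIntegrable (F x) volume 0 (1/2) := (hFcont x).intervalIntegrable _ _
    have hint2 : IntervalIntegrable (F x) volume (1/2) 1 := (hFcont x).intervalIntegrable _ _
    have hsplit : radialSolution Φ (⇑v) x
        = (∫ t in (0:ℝ)..(1/2), F x t) + ∫ t in (1/2 : ℝ)..1, F x t := by
      rw [hfeq, ← intervalIntegral.integral_add_adjacent_intervals hint1 hint2]
    set E₁ : ℝ := Real.exp (M * C / 2) * Real.exp (-(b * ‖x‖ ^ (1 + ω))) * (n * ‖x‖ * S₀)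
      with hE₁def
    set E₂ : ℝ := n * ‖x‖ * (Sk / (‖x‖ / 2) ^ (k + 1)) with hE₂def
    have hb1 : ‖∫ t in (0:ℝ)..(1/2), F x t‖ ≤ E₁ * |1/2 - 0| := by
      apply intervalIntegral.norm_integral_le_of_norm_le_const
      intro t ht
      rw [Set.uIoc_of_le (by norm_num : (0:ℝ) ≤ 1/2)] at ht
      rw [hnorm]
      have hB := lemB x hxR t ht.1.le ht.2
      have hexp : Real.exp (-(Φ x - Φ (t • x)) / 2)
          ≤ Real.exp (M * C / 2) * Real.exp (-(b * ‖x‖ ^ (1 + ω))) := by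
        rw [← Real.exp_add]
        apply Real.exp_le_exp.mpr
        have hbeq : b * ‖x‖ ^ (1 + ω) = (1/2) * ((1/2 : ℝ) ^ ω * ‖x‖ ^ (1 + ω) / C) / 2 := by
          rw [hbdef]; field_simp; ring
        linarith [hB, hbeq.le, hbeq.ge]
      calc Real.exp (-(Φ x - Φ (t • x)) / 2) * ‖∑ j, (x j : ℂ) * v (t • x) j‖
          ≤ (Real.exp (M * C / 2) * Real.exp (-(b * ‖x‖ ^ (1 + ω)))) * (n * ‖x‖ * ‖v (t • x)‖) :=
            mul_le_mul hexp (stmt17_sum_le x _) (norm_nonneg _)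
              (mul_nonneg (Real.exp_nonneg _) (Real.exp_nonneg _))
        _ ≤ E₁ := by
            rw [hE₁def]
            refine mul_le_mul_of_nonneg_left ?_
              (mul_nonneg (Real.exp_nonneg _) (Real.exp_nonneg _))
            exact mul_le_mul_of_nonneg_left (hS₀ _)
              (mul_nonneg (Nat.cast_nonneg n) (norm_nonneg x))
    have hb2 : ‖∫ t in (1/2 : ℝ)..1, F x t‖ ≤ E₂ * |1 - 1/2| := by
      apply intervalIntegral.norm_integral_le_of_norm_le_const
      intro t ht
      rw [Set.uIoc_of_le (by norm_num : (1/2:ℝ) ≤ 1)] at ht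
      have ht0 : (1/2 : ℝ) ≤ t := ht.1.le
      have ht1 : t ≤ 1 := ht.2
      rw [hnorm]
      have hexp1 : Real.exp (-(Φ x - Φ (t • x)) / 2) ≤ 1 := by
        rw [show (1:ℝ) = Real.exp 0 by simp]
        exact Real.exp_le_exp.mpr (by have := lemA0 x hxR t ht0 ht1; linarith)
      have htxn : ‖t • x‖ = t * ‖x‖ := by
        rw [norm_smul, Real.norm_eq_abs, abs_of_pos (by linarith)]
      have hge : ‖x‖ / 2 ≤ ‖t • x‖ := by rw [htxn]; nlinarith
      have hpows : (‖x‖ / 2) ^ (k + 1) ≤ ‖t • x‖ ^ (k + 1) :=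
        pow_le_pow_left₀ (by positivity) hge _
      have hvb : ‖v (t • x)‖ ≤ Sk / (‖x‖ / 2) ^ (k + 1) := by
        rw [le_div_iff₀ (by positivity)]
        calc ‖v (t • x)‖ * (‖x‖ / 2) ^ (k + 1)
            ≤ ‖v (t • x)‖ * ‖t • x‖ ^ (k + 1) :=
              mul_le_mul_of_nonneg_left hpows (norm_nonneg _)
          _ = ‖t • x‖ ^ (k + 1) * ‖v (t • x)‖ := mul_comm _ _
          _ ≤ Sk := hSk _
      calc Real.exp (-(Φ x - Φ (t • x)) / 2) * ‖∑ j, (x j : ℂ) * v (t • x) j‖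
          ≤ 1 * (n * ‖x‖ * ‖v (t • x)‖) :=
            mul_le_mul hexp1 (stmt17_sum_le x _) (norm_nonneg _) zero_le_one
        _ = n * ‖x‖ * ‖v (t • x)‖ := one_mul _
        _ ≤ E₂ := mul_le_mul_of_nonneg_left hvb
            (mul_nonneg (Nat.cast_nonneg n) (norm_nonneg x))
    -- combine
    have hX : ‖x‖ ≤ ‖x‖ ^ (1 + ω) := by
      calc ‖x‖ = ‖x‖ ^ (1:ℝ) := (Real.rpow_one _).symm
        _ ≤ ‖x‖ ^ (1 + ω) := Real.rpow_le_rpow_of_exponent_le hx1 (by linarith)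
    have hexpX : Real.exp (-(b * ‖x‖ ^ (1 + ω))) ≤ Real.exp (-(b * ‖x‖)) :=
      Real.exp_le_exp.mpr (by nlinarith)
    have hterm1 : ‖x‖ ^ (k + 1) * Real.exp (-(b * ‖x‖ ^ (1 + ω)))
        ≤ (Nat.factorial (k + 1) : ℝ) / b ^ (k + 1) :=
      le_trans (mul_le_mul_of_nonneg_left hexpX (by positivity)) (hfac ‖x‖ (norm_nonneg x))
    have hqu : ‖x‖ ^ (k + 1) / (‖x‖ / 2) ^ (k + 1) = 2 ^ (k + 1) := by
      have hxne : ‖x‖ ^ (k + 1) ≠ 0 := by positivity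
      rw [div_pow, div_div_eq_mul_div, mul_comm, mul_div_assoc, div_self hxne, mul_one]
    calc ‖x‖ ^ k * ‖radialSolution Φ (⇑v) x‖
        ≤ ‖x‖ ^ k * (E₁ * |1/2 - 0| + E₂ * |1 - 1/2|) := by
          rw [hsplit]
          refine mul_le_mul_of_nonneg_left ?_ (by positivity)
          exact le_trans (norm_add_le _ _) (add_le_add hb1 hb2)
      _ = (n * S₀ / 2) * Real.exp (M * C / 2) * (‖x‖ ^ (k + 1) * Real.exp (-(b * ‖x‖ ^ (1 + ω))))
          + (n * Sk / 2) * (‖x‖ ^ (k + 1) / (‖x‖ / 2) ^ (k + 1)) := by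
          rw [show |(1/2 : ℝ) - 0| = 1/2 by norm_num, show |(1 : ℝ) - 1/2| = 1/2 by norm_num,
            hE₁def, hE₂def]
          rw [pow_succ]
          field_simp
          ring
      _ ≤ A₁ + A₂ := by
          refine add_le_add ?_ ?_
          · exact mul_le_mul_of_nonneg_left hterm1 (by positivity)
          · rw [hqu, hA₂def]
            nlinarith [mul_nonneg (mul_nonneg (Nat.cast_nonneg (α := ℝ) n) hSkpos.le)
              (pow_nonneg (by norm_num : (0:ℝ) ≤ 2) (k + 1))]

end main

/-- if `Φ ∈ C¹(ℝⁿ, ℝ)` satisfies condition (IV_ω) and `v` is a Schwartz function,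
then `f(x) = ∫₀¹ e^{−(Φ(x)−Φ(tx))/2} (x·v(tx)) dt` satisfies `sup_x |x|^k |f(x)| < ∞` for all
`k`; in particular `f ∈ L²(ℝⁿ)`. -/
theorem stmt17 {n : ℕ} (Φ : EuclideanSpace ℝ (Fin n) → ℝ) (hΦ : ContDiff ℝ 1 Φ)
    (ω C : ℝ) (hω : 0 < ω) (hC : 0 < C)
    (hIV : ∀ x : EuclideanSpace ℝ (Fin n), C ≤ ‖x‖ → ‖x‖ ^ (1 + ω) / C ≤ fderiv ℝ Φ x x)
    (v : SchwartzMap (EuclideanSpace ℝ (Fin n)) (EuclideanSpace ℂ (Fin n))) :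
    (∀ k : ℕ, ∃ M : ℝ, ∀ x : EuclideanSpace ℝ (Fin n),
      ‖x‖ ^ k * ‖radialSolution Φ (⇑v) x‖ ≤ M) ∧
    MemLp (radialSolution Φ (⇑v)) 2 volume := by
  have key := stmt17_key Φ v hΦ ω C hω hC hIV
  refine ⟨fun k => ⟨(key k).choose, (key k).choose_spec.2⟩, ?_⟩
  set f := radialSolution Φ (⇑v) with hf
  have hcont : Continuous f := stmt17_cont Φ v hΦ
  have hmeas : AEStronglyMeasurable f volume := hcont.aestronglyMeasurable
  obtain ⟨M₀, hM₀0, hM₀⟩ := key 0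
  obtain ⟨Mm, hMm0, hMm⟩ := key (n + 1)
  set m : ℕ := n + 1
  have hbound : ∀ x : EuclideanSpace ℝ (Fin n),
      ‖f x‖ ≤ 2 ^ m * (M₀ + Mm) * ((1 + ‖x‖) ^ m)⁻¹ := by
    intro x
    have h1 : (1 + ‖x‖) ^ m * ‖f x‖ ≤ 2 ^ m * (M₀ + Mm) := by
      have hr : (0:ℝ) ≤ ‖x‖ := norm_nonneg x
      have h2 : (1 + ‖x‖) ^ m ≤ 2 ^ m * (1 + ‖x‖ ^ m) := by
        rcases le_total ‖x‖ 1 with h | h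
        · calc (1 + ‖x‖) ^ m ≤ 2 ^ m := pow_le_pow_left₀ (by positivity) (by linarith) m
            _ ≤ 2 ^ m * (1 + ‖x‖ ^ m) := by nlinarith [pow_nonneg hr m, (by positivity : (0:ℝ) < (2:ℝ)^m)]
        · calc (1 + ‖x‖) ^ m ≤ (2 * ‖x‖) ^ m := pow_le_pow_left₀ (by positivity) (by linarith) m
            _ = 2 ^ m * ‖x‖ ^ m := mul_pow 2 _ m
            _ ≤ 2 ^ m * (1 + ‖x‖ ^ m) := by nlinarith [(by positivity : (0:ℝ) < (2:ℝ)^m)]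
      calc (1 + ‖x‖) ^ m * ‖f x‖ ≤ 2 ^ m * (1 + ‖x‖ ^ m) * ‖f x‖ :=
            mul_le_mul_of_nonneg_right h2 (norm_nonneg _)
        _ = 2 ^ m * (1 * ‖f x‖ + ‖x‖ ^ m * ‖f x‖) := by ring
        _ ≤ 2 ^ m * (M₀ + Mm) := by
            gcongr
            · simpa using hM₀ x
            · exact hMm x
    have hpos : (0:ℝ) < (1 + ‖x‖) ^ m := by positivity
    have := (le_div_iff₀' hpos).mpr h1
    simpa [div_eq_mul_inv] using this
  rw [memLp_two_iff_integrable_sq_norm hmeas]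
  have hnr : ((Module.finrank ℝ (EuclideanSpace ℝ (Fin n))) : ℝ) < ((2 * m : ℕ) : ℝ) := by
    rw [finrank_euclideanSpace_fin]
    have : n < 2 * m := by omega
    exact_mod_cast this
  have hint : Integrable (fun x : EuclideanSpace ℝ (Fin n) => (1 + ‖x‖) ^ (-((2*m : ℕ) : ℝ))) volume :=
    integrable_one_add_norm hnr
  refine Integrable.mono' (hint.const_mul ((2 ^ m * (M₀ + Mm))^2)) ((hcont.norm.pow 2).aestronglyMeasurable) ?_
  refine Filter.Eventually.of_forall fun x => ?_
  have hb := hbound x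
  have h1x : (0:ℝ) < 1 + ‖x‖ := by positivity
  have : ‖f x‖ ^ 2 ≤ (2 ^ m * (M₀ + Mm) * ((1 + ‖x‖) ^ m)⁻¹) ^ 2 := by
    apply pow_le_pow_left₀ (norm_nonneg _) hb
  rw [Real.norm_eq_abs, abs_of_nonneg (by positivity)]
  refine this.trans (le_of_eq ?_)
  rw [mul_pow, inv_pow, ← pow_mul, Real.rpow_neg h1x.le, Real.rpow_natCast, mul_comm 2 m]
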